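/- Let V be a finite vertex set, let G be a tree (connected acyclic simple graph) on V with a distinguished vertex r, and let B be a complex matrix indexed by V × Fin 3 that is G-invertible. Let W be a positive semidefinite complex matrix indexed by V × Fin 3 such that W (r,a) (r,b) = v a * conj (v b) for all a, b ∈ Fin 3, where v : Fin 3 → ℂ is a nonzero vector, and suppose trace (B * W) = 0. Then there exists a vector u : V × Fin 3 → ℂ with u (r,a) = v a for all a ∈ Fin 3 and W (i,a) (j,b) = u (i,a) * conj (u (j,b)) for all (i,a), (j,b); in particular, W has rank 1. (This is the matrix-theoretic content of Theorem 2: the optimal solution of the penalized SDP relaxation PE(u) satisfies the rank-1 constraint and recovers a vector of nodal voltages whose slack-bus block equals the prescribed reference voltage.) -/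

import Mathlib

open Matrix
open scoped ComplexOrder

/-- The `(i,j)` block of a matrix indexed by `V × Fin 3`:
the 3×3 matrix `(a,b) ↦ X (i,a) (j,b)`. -/
def blockOf {V : Type*} (X : Matrix (V × Fin 3) (V × Fin 3) ℂ) (i j : V) :
    Matrix (Fin 3) (Fin 3) ℂ :=
  Matrix.of fun a b => X (i, a) (j, b)

/-- `X` is `G`-invertible: `X` is positive semidefinite, its blocks on edges of
`G` are invertible, and its blocks on non-adjacent pairs of distinct vertices
vanish. -/
def GInvertible {V : Type*} [Fintype V] [DecidableEq V] (G : SimpleGraph V)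
    (X : Matrix (V × Fin 3) (V × Fin 3) ℂ) : Prop :=
  X.PosSemidef ∧
  (∀ i j : V, G.Adj i j → IsUnit (blockOf X i j)) ∧
  (∀ i j : V, i ≠ j → ¬ G.Adj i j → blockOf X i j = 0)

section Aux

variable {V : Type*} [Fintype V] [DecidableEq V]

/-- `G` with vertex `p` isolated. -/
def avoidG (G : SimpleGraph V) (p : V) : SimpleGraph V where
  Adj a b := G.Adj a b ∧ a ≠ p ∧ b ≠ p
  symm := ⟨fun a b ⟨h, h1, h2⟩ => ⟨h.symm, h2, h1⟩⟩
  loopless := ⟨fun a ⟨h, _, _⟩ => G.loopless.irrefl a h⟩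

lemma avoidG_adj {G : SimpleGraph V} {p a b : V} :
    (avoidG G p).Adj a b ↔ G.Adj a b ∧ a ≠ p ∧ b ≠ p := Iff.rfl

lemma avoidG_le (G : SimpleGraph V) (p : V) : avoidG G p ≤ G := by intro a b h; exact (avoidG_adj.mp h).1

lemma avoidG_walk_ne {G : SimpleGraph V} {p a b : V}
    (w : (avoidG G p).Walk a b) (ha : a ≠ p) : b ≠ p := by
  induction w with
  | nil => exact ha
  | cons h q ih => exact ih (avoidG_adj.mp h).2.2

lemma avoidG_walk_support_ne {G : SimpleGraph V} {p a b : V}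
    (w : (avoidG G p).Walk a b) (ha : a ≠ p) : ∀ x ∈ w.support, x ≠ p := by
  induction w with
  | nil => intro x hx; simp at hx; subst hx; exact ha
  | cons h q ih =>
      intro x hx
      rcases (SimpleGraph.Walk.mem_support_iff _).mp hx with rfl | hx
      · exact ha
      · exact ih (avoidG_adj.mp h).2.2 x hx

lemma uniq_nbr {G : SimpleGraph V} (hG : G.IsAcyclic) {p i w : V}
    (hpi : G.Adj p i) (hpw : G.Adj p w)
    (hr : (avoidG G p).Reachable i w) : w = i := by
  by_contra hne
  obtain ⟨q⟩ := hr
  have hps : ∀ x ∈ q.support, x ≠ p := avoidG_walk_support_ne q hpi.ne'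
  -- transfer to G
  let q' : G.Walk i w := q.mapLe (avoidG_le G p)
  have hps' : p ∉ q'.support := by
    intro hp
    have : q'.support = q.support := by
      show (q.map _).support = q.support
      rw [SimpleGraph.Walk.support_map]
      convert List.map_id q.support; rfl
    rw [this] at hp
    exact hps p hp rfl
  -- take the underlying path from w to i
  let Q : G.Walk w i := q'.reverse.toPath
  have hQpath : Q.IsPath := (q'.reverse.toPath : G.Path w i).2
  have hQp : p ∉ Q.support := by
    intro hp
    have := SimpleGraph.Walk.support_toPath_subset q'.reverse hp
    rw [SimpleGraph.Walk.support_reverse] at this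
    exact hps' (List.mem_reverse.mp this)
  -- R : walk w p
  let R : G.Walk w p := Q.concat hpi.symm
  have hRpath : R.IsPath := by
    rw [← SimpleGraph.Walk.isPath_reverse_iff]
    have : R.reverse = SimpleGraph.Walk.cons hpi Q.reverse := by
      simp [R, SimpleGraph.Walk.reverse_concat]
    rw [this, SimpleGraph.Walk.cons_isPath_iff]
    exact ⟨hQpath.reverse, by rwa [SimpleGraph.Walk.support_reverse, List.mem_reverse]⟩
  have hedge : s(p, w) ∉ R.edges := by
    intro hmem
    rw [SimpleGraph.Walk.edges_concat] at hmem
    rw [List.concat_eq_append, List.mem_append] at hmem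
    rcases hmem with hmem | hmem
    · exact hQp (SimpleGraph.Walk.fst_mem_support_of_mem_edges Q hmem)
    · rw [List.mem_singleton] at hmem
      rcases Sym2.eq_iff.mp hmem with ⟨h1, h2⟩ | ⟨h1, h2⟩
      · exact hpi.ne h1
      · exact hne h2
  exact hG (SimpleGraph.Walk.cons hpw R)
    ((SimpleGraph.Walk.cons_isCycle_iff R hpw).mpr ⟨hRpath, hedge⟩)

lemma ker_lemma (G : SimpleGraph V) (hG : G.IsTree) (r : V)
    (B : Matrix (V × Fin 3) (V × Fin 3) ℂ) (hB : GInvertible G B)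
    (x : V × Fin 3 → ℂ) (hx : B *ᵥ x = 0) (hr : ∀ a, x (r, a) = 0) :
    x = 0 := by
  classical
  obtain ⟨hBpsd, hBunit, hBzero⟩ := hB
  have hconn : G.Connected := hG.isConnected
  have key : ∀ n : ℕ, ∀ i : V, G.dist r i ≤ n → ∀ a, x (i, a) = 0 := by
    intro n
    induction n with
    | zero =>
        intro i hi a
        have : G.dist r i = 0 := Nat.le_zero.mp hi
        have : r = i := (hconn.dist_eq_zero_iff).mp this
        subst this; exact hr a
    | succ n ih =>
        intro i hi a
        rcases Nat.lt_or_ge (G.dist r i) (n + 1) with hlt | hge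
        · exact ih i (Nat.lt_succ_iff.mp hlt) a
        have hd : G.dist r i = n + 1 := le_antisymm hi hge
        have hir : i ≠ r := by
          intro h; subst h; simp [SimpleGraph.dist_self] at hd
        -- find parent p
        obtain ⟨Wk, hWk⟩ := (hconn r i).exists_walk_length_eq_dist
        obtain ⟨p, hip, q, hq⟩ := Wk.reverse.exists_eq_cons_of_ne hir
        have hqlen : q.length = n := by
          have := congrArg SimpleGraph.Walk.length hq
          rw [SimpleGraph.Walk.length_reverse, hWk, hd] at this
          simpa using this.symm
        have hdp : G.dist r p ≤ n := by
          have := SimpleGraph.dist_le q.reverse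
          rwa [SimpleGraph.Walk.length_reverse, hqlen] at this
        have hxp : ∀ b, x (p, b) = 0 := ih p hdp
        have hpi : G.Adj p i := hip.symm
        -- the subtree across the edge p-i
        set T : Set V := {u | (avoidG G p).Reachable i u} with hT
        have hiT : i ∈ T := SimpleGraph.Reachable.refl i
        have hTnp : ∀ u ∈ T, u ≠ p := by
          intro u hu
          obtain ⟨w⟩ := hu
          exact avoidG_walk_ne w hpi.ne'
        have hclosure : ∀ u ∈ T, ∀ w, G.Adj u w → w ≠ p → w ∈ T := by
          intro u hu w huw hwp
          exact SimpleGraph.Reachable.trans hu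
            (SimpleGraph.Adj.reachable (avoidG_adj.mpr ⟨huw, hTnp u hu, hwp⟩))
        set y : V × Fin 3 → ℂ := fun q => if q.1 ∈ T then x q else 0 with hy
        have hyT : ∀ u a, u ∈ T → (B *ᵥ y) (u, a) = 0 := by
          intro u a hu
          have : (B *ᵥ y) (u, a) = (B *ᵥ x) (u, a) := by
            simp only [Matrix.mulVec, dotProduct]
            refine Finset.sum_congr rfl ?_
            rintro ⟨w, b⟩ -
            by_cases hwT : w ∈ T
            · simp [hy, hwT]
            · simp only [hy, hwT, if_false, mul_zero]
              by_cases hwp : w = p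
              · subst hwp; rw [hxp b, mul_zero]
              · have hadj : ¬ G.Adj u w := fun h => hwT (hclosure u hu w h hwp)
                have hne : u ≠ w := fun h => hwT (h ▸ hu)
                have : B (u, a) (w, b) = 0 := by
                  have := hBzero u w hne hadj
                  have := congrFun (congrFun this a) b
                  exact this
                rw [this, zero_mul]
          rw [this, hx]; rfl
        have hquad : star y ⬝ᵥ B *ᵥ y = 0 := by
          simp only [dotProduct, Pi.star_apply]
          refine Finset.sum_eq_zero ?_
          rintro ⟨u, a⟩ -
          by_cases hu : u ∈ T
          · rw [hyT u a hu, mul_zero]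
          · simp [hy, hu]
        have hBy : B *ᵥ y = 0 := (hBpsd.dotProduct_mulVec_zero_iff y).mp hquad
        -- evaluate row (p, a')
        have hrow : ∀ a', ((blockOf B p i) *ᵥ (fun b => x (i, b))) a' = 0 := by
          intro a'
          have h0 : (B *ᵥ y) (p, a') = 0 := congrFun hBy (p, a')
          have hsum : (B *ᵥ y) (p, a') = ∑ b, B (p, a') (i, b) * y (i, b) := by
            simp only [Matrix.mulVec, dotProduct]
            rw [Fintype.sum_prod_type]
            refine Finset.sum_eq_single i (fun w _ hwi => ?_) (by simp)
            refine Finset.sum_eq_zero fun b _ => ?_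
            by_cases hwT : w ∈ T
            · have hwp : w ≠ p := hTnp w hwT
              have hadj : ¬ G.Adj p w := fun h => hwi (uniq_nbr hG.IsAcyclic hpi h hwT)
              have hBz : B (p, a') (w, b) = 0 := by
                have := congrFun (congrFun (hBzero p w (Ne.symm hwp) hadj) a') b
                exact this
              rw [hBz, zero_mul]
            · simp [hy, hwT]
          have : ∑ b, B (p, a') (i, b) * y (i, b) = 0 := by rw [← hsum, h0]
          rw [show ((blockOf B p i) *ᵥ (fun b => x (i, b))) a'
              = ∑ b, B (p, a') (i, b) * x (i, b) from rfl]
          simpa [hy, hiT] using this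
        have hxi : (fun b => x (i, b)) = 0 := by
          have hu := hBunit p i hpi
          obtain ⟨M, hM⟩ := hu.exists_left_inv
          have h1 : (blockOf B p i) *ᵥ (fun b => x (i, b)) = 0 := funext hrow
          have := congrArg (fun z => M *ᵥ z) h1
          simpa [Matrix.mulVec_mulVec, hM] using this
        exact congrFun hxi a
  funext q
  have := key (G.dist r q.1) q.1 le_rfl q.2
  simpa using this


end Aux

lemma trace_self_mul_conjTranspose_eq_zero {n m : Type*} [Fintype n] [Fintype m]
    (M : Matrix n m ℂ) (h : Matrix.trace (M * Mᴴ) = 0) : M = 0 := by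
  have hre : ∑ i, ∑ j, Complex.normSq (M i j) = 0 := by
    have : Matrix.trace (M * Mᴴ) = ((∑ i, ∑ j, Complex.normSq (M i j) : ℝ) : ℂ) := by
      simp only [Matrix.trace, Matrix.diag, Matrix.mul_apply, Matrix.conjTranspose_apply]
      push_cast
      refine Finset.sum_congr rfl fun i _ => Finset.sum_congr rfl fun j _ => ?_
      rw [← Complex.mul_conj]
      rfl
    rw [this] at h
    exact_mod_cast h
  ext i j
  have h1 : ∀ i ∈ Finset.univ, (0:ℝ) ≤ ∑ j, Complex.normSq (M i j) :=
    fun i _ => Finset.sum_nonneg fun j _ => Complex.normSq_nonneg _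
  have h2 := (Finset.sum_eq_zero_iff_of_nonneg h1).mp hre i (Finset.mem_univ i)
  have h3 := (Finset.sum_eq_zero_iff_of_nonneg
    (fun j _ => Complex.normSq_nonneg (M i j))).mp h2 j (Finset.mem_univ j)
  simpa using Complex.normSq_eq_zero.mp h3

lemma mul_eq_zero_of_trace_mul {n : Type*} [Fintype n] [DecidableEq n]
    {B W : Matrix n n ℂ} (hB : B.PosSemidef) (hW : W.PosSemidef)
    (h : Matrix.trace (B * W) = 0) : B * W = 0 := by
  obtain ⟨C, hC⟩ : ∃ C : Matrix n n ℂ, B = Cᴴ * C := by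
    open scoped MatrixOrder in
    obtain ⟨C, rfl⟩ := CStarAlgebra.nonneg_iff_eq_star_mul_self.mp hB.nonneg
    exact ⟨C, rfl⟩
  obtain ⟨A, hA⟩ : ∃ A : Matrix n n ℂ, W = Aᴴ * A := by
    open scoped MatrixOrder in
    obtain ⟨A, rfl⟩ := CStarAlgebra.nonneg_iff_eq_star_mul_self.mp hW.nonneg
    exact ⟨A, rfl⟩
  have key : C * Aᴴ = 0 := by
    apply trace_self_mul_conjTranspose_eq_zero
    have : (C * Aᴴ) * (C * Aᴴ)ᴴ = C * (Aᴴ * A) * Cᴴ := by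
      rw [Matrix.conjTranspose_mul, Matrix.conjTranspose_conjTranspose]
      noncomm_ring
    rw [this, ← hA]
    calc Matrix.trace (C * W * Cᴴ) = Matrix.trace (Cᴴ * (C * W)) :=
          Matrix.trace_mul_comm (C * W) Cᴴ
        _ = Matrix.trace (B * W) := by rw [hC, Matrix.mul_assoc]
        _ = 0 := h
  calc B * W = Cᴴ * (C * Aᴴ) * A := by rw [hC, hA]; noncomm_ring
    _ = 0 := by rw [key, Matrix.mul_zero, Matrix.zero_mul]


/-- **Theorem 2 (matrix-theoretic content).** Over a tree `G`, if `B` is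
`G`-invertible, `W` is positive semidefinite with slack-bus block
`W (r,a) (r,b) = v a * conj (v b)` for a nonzero reference voltage `v`, and
`trace (B * W) = 0`, then `W = u uᴴ` for a vector `u` of nodal voltages whose
slack-bus block equals `v`; in particular `W` has rank 1. -/
theorem penalized_sdp_relaxation_exact
    {V : Type*} [Fintype V] [DecidableEq V]
    (G : SimpleGraph V) (hG : G.IsTree) (r : V)
    (B W : Matrix (V × Fin 3) (V × Fin 3) ℂ)
    (hB : GInvertible G B)
    (hW : W.PosSemidef)
    (v : Fin 3 → ℂ) (hv : v ≠ 0)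
    (hW00 : ∀ a b : Fin 3, W (r, a) (r, b) = v a * starRingEnd ℂ (v b))
    (htr : Matrix.trace (B * W) = 0) :
    (∃ u : V × Fin 3 → ℂ,
      (∀ a : Fin 3, u (r, a) = v a) ∧
      (∀ p q : V × Fin 3, W p q = u p * starRingEnd ℂ (u q))) ∧
    W.rank = 1 := by
  classical
  obtain ⟨a₀, ha₀⟩ : ∃ a₀, v a₀ ≠ 0 := Function.ne_iff.mp hv
  have hBW : B * W = 0 := mul_eq_zero_of_trace_mul hB.1 hW htr
  have hcol : ∀ q, B *ᵥ (fun p => W p q) = 0 := by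
    intro q; funext p
    have h := congrFun (congrFun hBW p) q
    simpa [Matrix.mul_apply, Matrix.mulVec, dotProduct] using h
  set c : ℂ := (starRingEnd ℂ (v a₀))⁻¹ with hc
  set u : V × Fin 3 → ℂ := fun p => c * W p (r, a₀) with hu
  have hur : ∀ a, u (r, a) = v a := by
    intro a
    have hca : starRingEnd ℂ (v a₀) ≠ 0 := by
      simpa using ha₀
    simp only [hu, hc, hW00]
    field_simp
  have hBu : B *ᵥ u = 0 := by
    have h : u = c • (fun p => W p (r, a₀)) := rfl
    rw [h, Matrix.mulVec_smul, hcol, smul_zero]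
  have hHerm : ∀ p q : V × Fin 3, starRingEnd ℂ (W q p) = W p q := by
    intro p q
    exact hW.1.apply p q
  have hprop : ∀ (a : Fin 3) (q : V × Fin 3),
      v a * W (r, a₀) q = v a₀ * W (r, a) q := by
    intro a q
    by_cases ha : a = a₀
    · subst ha; ring
    · set ξ : V × Fin 3 → ℂ := fun p =>
        (if p = (r, a₀) then starRingEnd ℂ (v a) else 0)
        - (if p = (r, a) then starRingEnd ℂ (v a₀) else 0) with hξ
      have hWξq : ∀ s, (W *ᵥ ξ) s
          = starRingEnd ℂ (v a) * W s (r, a₀)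
            - starRingEnd ℂ (v a₀) * W s (r, a) := by
        intro s
        simp only [Matrix.mulVec, dotProduct, hξ, mul_sub, mul_ite, mul_zero]
        rw [Finset.sum_sub_distrib,
          Finset.sum_ite_eq' Finset.univ ((r, a₀) : V × Fin 3),
          Finset.sum_ite_eq' Finset.univ ((r, a) : V × Fin 3)]
        simp [mul_comm]
      have hquad : star ξ ⬝ᵥ W *ᵥ ξ = 0 := by
        have hsξ : star ξ = fun p =>
            (if p = (r, a₀) then v a else 0)
            - (if p = (r, a) then v a₀ else 0) := by
          funext p
          simp only [Pi.star_apply, hξ, star_sub]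
          rw [apply_ite (star : ℂ → ℂ), apply_ite (star : ℂ → ℂ)]
          simp [Complex.star_def]
        simp only [dotProduct, hsξ, sub_mul, ite_mul, zero_mul]
        rw [Finset.sum_sub_distrib,
          Finset.sum_ite_eq' Finset.univ ((r, a₀) : V × Fin 3),
          Finset.sum_ite_eq' Finset.univ ((r, a) : V × Fin 3)]
        simp only [Finset.mem_univ, if_true, hWξq, hW00]
        ring
      have hWξ : W *ᵥ ξ = 0 := (hW.dotProduct_mulVec_zero_iff ξ).mp hquad
      have h1 : starRingEnd ℂ (v a) * W q (r, a₀)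
          = starRingEnd ℂ (v a₀) * W q (r, a) := by
        have h0 : (W *ᵥ ξ) q = 0 := by rw [hWξ]; rfl
        rw [hWξq q] at h0
        linear_combination h0
      have h2 := congrArg (starRingEnd ℂ) h1
      simp only [_root_.map_mul, Complex.conj_conj, hHerm] at h2
      linear_combination h2
  have hM : ∀ p q : V × Fin 3, W p q = u p * starRingEnd ℂ (u q) := by
    have key : ∀ q : V × Fin 3,
        (fun p => W p q - u p * starRingEnd ℂ (u q)) = 0 := by
      intro q
      apply ker_lemma G hG r B hB
      · have h : (fun p => W p q - u p * starRingEnd ℂ (u q))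
            = (fun p => W p q) - (starRingEnd ℂ (u q)) • u := by
          funext p
          simp [smul_eq_mul]
          ring
        rw [h, Matrix.mulVec_sub, hcol, Matrix.mulVec_smul, hBu, smul_zero, sub_zero]
      · intro a
        rw [hur]
        have hcc : starRingEnd ℂ (u q) = (v a₀)⁻¹ * W (r, a₀) q := by
          simp only [hu, hc, _root_.map_mul, map_inv₀, Complex.conj_conj, hHerm]
        rw [hcc]
        have hp := hprop a q
        have h3 : (v a₀)⁻¹ * (v a₀ * W (r, a) q) = W (r, a) q := by
          field_simp
        rw [show v a * ((v a₀)⁻¹ * W (r, a₀) q)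
            = (v a₀)⁻¹ * (v a * W (r, a₀) q) by ring, hp, h3, sub_self]
    intro p q
    have := congrFun (key q) p
    simpa [sub_eq_zero] using this
  refine ⟨⟨u, hur, hM⟩, ?_⟩
  have hWfac : W = Matrix.replicateCol Unit u * Matrix.replicateRow Unit (star u) := by
    ext p q
    rw [Matrix.mul_apply]
    simp [Matrix.replicateCol_apply, Matrix.replicateRow_apply, hM p q]
  have hle : W.rank ≤ 1 := by
    calc W.rank ≤ (Matrix.replicateCol Unit u).rank := by
          rw [hWfac]; exact Matrix.rank_mul_le_left _ _
      _ ≤ Fintype.card Unit := Matrix.rank_le_card_width _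
      _ = 1 := by simp
  have hne : W.rank ≠ 0 := by
    intro h0
    have hbot : LinearMap.range W.mulVecLin = ⊥ :=
      Submodule.finrank_eq_zero.mp h0
    have hWv : W *ᵥ Pi.single ((r, a₀) : V × Fin 3) 1 = 0 := by
      have : W *ᵥ Pi.single ((r, a₀) : V × Fin 3) 1
          ∈ LinearMap.range W.mulVecLin := ⟨_, rfl⟩
      rw [hbot] at this
      simpa using this
    have := congrFun hWv (r, a₀)
    rw [Matrix.mulVec_single] at this
    simp only [mul_one, hW00, Pi.zero_apply] at this
    exact ha₀ (by simpa [hW00, Complex.mul_conj, Complex.normSq_eq_zero] using this)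
  omega
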